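/- For all t ∈ [0, π/2], ξ(t) ≤ 0, where ξ(t) = (cos²t + 2t·sin t·cos t + t² − π²/4)/cos²t for t < π/2 and ξ(π/2) = 0. -/

import Mathlib

open Real

lemma stmt4_aux : ∀ t ∈ Set.Icc (0:ℝ) (π/2),
    Real.cos t ^ 2 + 2 * t * Real.sin t * Real.cos t + t ^ 2 ≤ π ^ 2 / 4 := by
  set f : ℝ → ℝ := fun t => Real.cos t ^ 2 + 2 * t * Real.sin t * Real.cos t + t ^ 2 with hf
  have hder : ∀ x : ℝ, HasDerivAt f (4 * x * Real.cos x ^ 2) x := by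
    intro x
    have h1 : HasDerivAt (fun t => Real.cos t ^ 2)
        (2 * Real.cos x ^ 1 * (-Real.sin x)) x := (Real.hasDerivAt_cos x).pow 2
    have h2 : HasDerivAt (fun t : ℝ => 2 * t * Real.sin t * Real.cos t)
        ((2 * Real.sin x + 2 * x * Real.cos x) * Real.cos x
          + 2 * x * Real.sin x * (-Real.sin x)) x := by
      have ha : HasDerivAt (fun t : ℝ => 2 * t * Real.sin t)
          (2 * Real.sin x + 2 * x * Real.cos x) x := by
        have := ((hasDerivAt_id x).const_mul (2:ℝ)).mul (Real.hasDerivAt_sin x)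
        refine this.congr_deriv ?_
        simp [id]
      exact ha.mul (Real.hasDerivAt_cos x)
    have h3 : HasDerivAt (fun t : ℝ => t ^ 2) (2 * x) x := by
      simpa using hasDerivAt_pow 2 x
    have := (h1.add h2).add h3
    refine this.congr_deriv (Eq.symm ?_)
    have hs := Real.sin_sq_add_cos_sq x
    linear_combination 2 * x * hs
  have hmono : MonotoneOn f (Set.Icc 0 (π/2)) := by
    apply monotoneOn_of_deriv_nonneg (convex_Icc _ _)
    · exact (Continuous.continuousOn (by continuity))
    · intro x hx
      exact (hder x).differentiableAt.differentiableWithinAt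
    · intro x hx
      rw [interior_Icc] at hx
      rw [(hder x).deriv]
      have hx0 := hx.1
      positivity
  intro t ht
  have hle : f t ≤ f (π/2) := hmono ht (Set.right_mem_Icc.mpr (by positivity)) ht.2
  have : f (π/2) = π ^ 2 / 4 := by
    simp [hf, Real.cos_pi_div_two, Real.sin_pi_div_two]; ring
  linarith [hle, this.le, this.ge]

theorem stmt4 (ξ : ℝ → ℝ)
    (hξ : ∀ t, t < π/2 →
      ξ t = (Real.cos t ^ 2 + 2 * t * Real.sin t * Real.cos t + t ^ 2 - π ^ 2 / 4) /
        Real.cos t ^ 2)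
    (hξ' : ξ (π/2) = 0) :
    ∀ t ∈ Set.Icc (0:ℝ) (π/2), ξ t ≤ 0 := by
  intro t ht
  rcases eq_or_lt_of_le ht.2 with h | h
  · rw [h, hξ']
  · rw [hξ t h]
    have hcos : 0 < Real.cos t := Real.cos_pos_of_mem_Ioo
      ⟨by linarith [ht.1, Real.pi_pos], h⟩
    have hnum := stmt4_aux t ht
    apply div_nonpos_of_nonpos_of_nonneg
    · linarith
    · positivity
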